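/- For the cancer flow, the nonzero torsion components are R^{(1)}_{(1)21} = −R^{(2)}_{(1)11} = a + (1/2)(1 − F_{PP} − F_{PQ}) and R^{(1)}_{(1)22} = −R^{(2)}_{(1)12} = (1/2)(a − F_{PQ}), where F_{PP} = −2hkPQ(3−kP²)/(1+kP²)³ and F_{PQ} = h(1−kP²)/(1+kP²)²; that is, ∂N₁₂/∂P = a + (1/2)(1 − F_{PP} − F_{PQ}) and ∂N₁₂/∂Q = (1/2)(a − F_{PQ}). -/

import Mathlib

/-- The nonzero torsion components of the cancer flow:
`∂N₁₂/∂P = a + (1/2)(1 − F_PP − F_PQ)` and `∂N₁₂/∂Q = (1/2)(a − F_PQ)`, where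
`F_PP = −2hkPQ(3−kP²)/(1+kP²)³` and `F_PQ = h(1−kP²)/(1+kP²)²`. -/
theorem cancer_flow_torsion (a h k : ℝ) (N12 : ℝ → ℝ → ℝ)
    (hN12 : ∀ P Q, N12 P Q = (1/2) * ((2*a+1) * P + a * Q
      - h * Q * (1 - k * P ^ 2) / (1 + k * P ^ 2) ^ 2
      - h * P / (1 + k * P ^ 2)))
    (P Q : ℝ) (hden : 1 + k * P ^ 2 ≠ 0) :
    deriv (fun p => N12 p Q) P
      = a + (1/2) * (1 - (-(2 * h * k * P * Q * (3 - k * P ^ 2)) / (1 + k * P ^ 2) ^ 3)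
          - h * (1 - k * P ^ 2) / (1 + k * P ^ 2) ^ 2) ∧
    deriv (fun q => N12 P q) Q
      = (1/2) * (a - h * (1 - k * P ^ 2) / (1 + k * P ^ 2) ^ 2) := by
  have hd2 : ((1 + k * P ^ 2) ^ 2 : ℝ) ≠ 0 := pow_ne_zero _ hden
  constructor
  · have h1 : HasDerivAt (fun p : ℝ => 1 + k * p ^ 2) (k * (2 * P)) P := by
      simpa using ((hasDerivAt_pow 2 P).const_mul k).const_add 1
    have h2 : HasDerivAt (fun p : ℝ => (1 + k * p ^ 2) ^ 2)
        (2 * (1 + k * P ^ 2) ^ 1 * (k * (2 * P))) P := h1.pow 2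
    have hnum : HasDerivAt (fun p : ℝ => h * Q * (1 - k * p ^ 2))
        (h * Q * (-(k * (2 * P)))) P := by
      simpa [sub_eq_add_neg] using ((((hasDerivAt_pow 2 P).const_mul k).neg.const_add 1).const_mul (h * Q))
    have h3 : HasDerivAt (fun p : ℝ => h * Q * (1 - k * p ^ 2) / (1 + k * p ^ 2) ^ 2)
        ((h * Q * (-(k * (2 * P))) * (1 + k * P ^ 2) ^ 2
          - h * Q * (1 - k * P ^ 2) * (2 * (1 + k * P ^ 2) ^ 1 * (k * (2 * P))))
          / ((1 + k * P ^ 2) ^ 2) ^ 2) P := hnum.div h2 hd2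
    have h4 : HasDerivAt (fun p : ℝ => h * p / (1 + k * p ^ 2))
        ((h * 1 * (1 + k * P ^ 2) - h * P * (k * (2 * P))) / (1 + k * P ^ 2) ^ 2) P :=
      ((hasDerivAt_id P).const_mul h).div h1 hden
    have hlin : HasDerivAt (fun p : ℝ => (2*a+1) * p + a * Q) ((2*a+1) * 1) P :=
      ((hasDerivAt_id P).const_mul (2*a+1)).add_const (a * Q)
    have hfull := (((hlin.sub h3).sub h4).const_mul (1/2 : ℝ))
    have heq : (fun p => N12 p Q) = fun p => (1/2) * (((2*a+1) * p + a * Q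
        - h * Q * (1 - k * p ^ 2) / (1 + k * p ^ 2) ^ 2) - h * p / (1 + k * p ^ 2)) := by
      funext p; rw [hN12]
    simp only [Pi.sub_apply] at hfull
    rw [heq, hfull.deriv]
    field_simp
    ring
  · have heq : (fun q => N12 P q) = fun q => (1/2) * (((2*a+1) * P + a * q
        - h * q * ((1 - k * P ^ 2) / (1 + k * P ^ 2) ^ 2)) - h * P / (1 + k * P ^ 2)) := by
      funext q; rw [hN12]; ring
    have hq : HasDerivAt (fun q : ℝ => (1/2) * (((2*a+1) * P + a * q
        - h * q * ((1 - k * P ^ 2) / (1 + k * P ^ 2) ^ 2)) - h * P / (1 + k * P ^ 2)))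
        ((1/2) * (a * 1 - h * 1 * ((1 - k * P ^ 2) / (1 + k * P ^ 2) ^ 2))) Q := by
      exact ((((hasDerivAt_id Q).const_mul a).const_add ((2*a+1)*P)).sub
        (((hasDerivAt_id Q).const_mul h).mul_const _)).sub_const _ |>.const_mul _
    rw [heq, hq.deriv]
    ring
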